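/- Let T be a labeled monomial tree. Then Δ(T) = 0 if and only if every non-root vertex label of T appears exactly twice and both occurrences lie in the same generation. In this case the edges of T are perfectly paired row by row (each edge is paired with the unique other edge carrying the same pair of endpoint labels, lying in the same generation), and each such pair consists of exactly one T₁ edge and one T₂ edge; that is, T admits a perfect row-wise Wick pairing. -/
import Mathlib


/-- A labeled monomial tree over labels `{1,…,N}` (encoded as `Fin N`): a finite rooted
tree of depth `t` whose vertices lie in levels `0,…,t` (root at level `t`, all leaves at
level `0`), each vertex carrying a label, subject to the non-backtracking condition and
the condition that every edge-label pair occurs on at least two edges. -/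
structure LabeledMonomialTree (N : ℕ) where
  depth : ℕ
  V : Type
  [instFintype : Fintype V]
  [instDecEq : DecidableEq V]
  root : V
  parent : V → V
  level : V → ℕ
  label : V → Fin N
  parent_root : parent root = root
  level_root : level root = depth
  level_le : ∀ v, level v ≤ depth
  level_parent : ∀ v, v ≠ root → level (parent v) = level v + 1
  leaves_at_zero : ∀ v, 1 ≤ level v → ∃ w, w ≠ root ∧ parent w = v
  nonbacktracking : ∀ w, w ≠ root → parent w ≠ root →
    label (parent (parent w)) ≠ label w
  edges_doubled : ∀ v, v ≠ root → ∃ w, w ≠ root ∧ w ≠ v ∧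
    s(label w, label (parent w)) = s(label v, label (parent v))

attribute [instance] LabeledMonomialTree.instFintype LabeledMonomialTree.instDecEq

namespace LabeledMonomialTree

variable {N : ℕ}

/-- The number of edges of `T` (each non-root vertex contributes the edge to its
parent). -/
def numEdges (T : LabeledMonomialTree N) : ℕ := Fintype.card {v : T.V // v ≠ T.root}

/-- The number of distinct vertex labels of `T`. -/
def numLabels (T : LabeledMonomialTree N) : ℕ := (Finset.univ.image T.label).card

/-- The excess `Δ(T) = |E(T)|/2 - |V(T)| + 1`, where `|V(T)|` is the number of distinct
vertex labels. -/
def excess (T : LabeledMonomialTree N) : ℚ :=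
  (T.numEdges : ℚ) / 2 - (T.numLabels : ℚ) + 1

/-- The unordered pair of endpoint labels of the edge from `v` to its parent. -/
def edgeSym (T : LabeledMonomialTree N) (v : T.V) : Sym2 (Fin N) :=
  s(T.label v, T.label (T.parent v))

/-- The number of vertices of `T` carrying the label `i`. -/
noncomputable def mult (T : LabeledMonomialTree N) (i : Fin N) : ℕ :=
  Set.ncard {v : T.V | T.label v = i}

end LabeledMonomialTree
namespace LabeledMonomialTree

variable {N : ℕ}

/-- A standard ordering of the edges of `T` (edges being identified with their child
vertices): an injective enumeration which lists edges generation by generation from the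
leaves up to the root (edges with child at a lower level come first), and within a
generation orders edges consistently with the order of their parent edges. -/
structure StdOrder (T : LabeledMonomialTree N) where
  ord : T.V → ℕ
  inj : Function.Injective ord
  level_mono : ∀ v w, v ≠ T.root → w ≠ T.root → T.level v < T.level w → ord v < ord w
  parent_mono : ∀ v w, v ≠ T.root → w ≠ T.root → T.level v = T.level w →
    ord v < ord w → ord (T.parent v) ≤ ord (T.parent w)

/-- A `T₁` edge: the first edge, in the standard ordering, whose child label is the
given one (the child label has not appeared previously). -/
def IsT1 (T : LabeledMonomialTree N) (O : StdOrder T) (v : T.V) : Prop :=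
  v ≠ T.root ∧ ∀ w, w ≠ T.root → O.ord w < O.ord v → T.label w ≠ T.label v

/-- A `T₂` edge: the second occurrence of an edge with a given pair of endpoint labels,
whose first occurrence was a `T₁` edge. -/
def IsT2 (T : LabeledMonomialTree N) (O : StdOrder T) (v : T.V) : Prop :=
  v ≠ T.root ∧ ∃ w, w ≠ T.root ∧ O.ord w < O.ord v ∧ T.edgeSym w = T.edgeSym v ∧
    T.IsT1 O w ∧
    ∀ u, u ≠ T.root → T.edgeSym u = T.edgeSym v → O.ord u < O.ord v → u = w

/-- A `T₃` edge: any edge which is neither `T₁` nor `T₂`. -/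
def IsT3 (T : LabeledMonomialTree N) (O : StdOrder T) (v : T.V) : Prop :=
  v ≠ T.root ∧ ¬ T.IsT1 O v ∧ ¬ T.IsT2 O v

end LabeledMonomialTree


namespace LabeledMonomialTree

theorem aux_core (T : LabeledMonomialTree N) (h : T.excess = 0) :
    (∀ v : T.V, v ≠ T.root → T.label v ≠ T.label T.root) ∧
    (∀ v w : T.V, v ≠ T.root → w ≠ T.root → T.edgeSym w = T.edgeSym v →
      T.label w = T.label v) ∧
    (∀ v : T.V, v ≠ T.root →
      ((Finset.univ.filter (fun w => w ≠ T.root)).filter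
        (fun w => T.edgeSym w = T.edgeSym v)).card = 2) ∧
    (∀ v w : T.V, v ≠ T.root → w ≠ T.root → T.label v = T.label w →
      T.level v = T.level w) ∧
    (∀ v w : T.V, v ≠ T.root → w ≠ T.root → T.label v = T.label w →
      T.edgeSym v = T.edgeSym w) := by
  classical
  set r := T.label T.root with hr
  set NR : Finset T.V := Finset.univ.filter (fun w => w ≠ T.root) with hNR
  have memNR : ∀ v : T.V, v ∈ NR ↔ v ≠ T.root := by
    intro v; simp [hNR]
  set S : Finset (Sym2 (Fin N)) := NR.image T.edgeSym with hS
  set A : Finset (Fin N) := Finset.univ.image T.label with hA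
  set B : Finset (Fin N) := NR.image T.label with hB
  set B' : Finset (Fin N) := B.erase r with hB'
  have hB'B : B' ⊆ B := Finset.erase_subset _ _
  have hBmem : ∀ v : T.V, v ≠ T.root → T.label v ∈ B := by
    intro v hv; exact Finset.mem_image_of_mem _ ((memNR v).mpr hv)
  have hSmem : ∀ v : T.V, v ≠ T.root → T.edgeSym v ∈ S := by
    intro v hv; exact Finset.mem_image_of_mem _ ((memNR v).mpr hv)
  -- the cardinality equation from excess = 0
  have hEcard : T.numEdges = NR.card := Fintype.card_subtype _
  have hE2L : NR.card + 2 = 2 * T.numLabels := by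
    have h1 : (T.numEdges : ℚ) / 2 - (T.numLabels : ℚ) + 1 = 0 := h
    have h2 : (NR.card : ℚ) + 2 = 2 * (T.numLabels : ℚ) := by
      rw [← hEcard]; linarith
    exact_mod_cast h2
  -- fiberwise decomposition of edges by their sym
  have fibersum : NR.card = ∑ s ∈ S, (NR.filter (fun v => T.edgeSym v = s)).card :=
    Finset.card_eq_sum_card_fiberwise (fun v hv => Finset.mem_image_of_mem _ hv)
  have fib2 : ∀ s ∈ S, 2 ≤ (NR.filter (fun v => T.edgeSym v = s)).card := by
    intro s hs
    obtain ⟨v, hv, rfl⟩ := Finset.mem_image.mp hs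
    have hvnr : v ≠ T.root := (memNR v).mp hv
    obtain ⟨w, hw, hwv, hsym⟩ := T.edges_doubled v hvnr
    have hsym' : T.edgeSym w = T.edgeSym v := hsym
    exact Finset.one_lt_card.mpr ⟨w, Finset.mem_filter.mpr ⟨(memNR w).mpr hw, hsym'⟩,
      v, Finset.mem_filter.mpr ⟨hv, rfl⟩, hwv⟩
  -- choice of a maximal-level non-root vertex for each label in B
  have hex : ∀ j : Fin N, ∃ v : T.V, j ∈ B → (v ≠ T.root ∧ T.label v = j ∧
      ∀ u, u ≠ T.root → T.label u = j → T.level u ≤ T.level v) := by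
    intro j
    by_cases hj : j ∈ B
    · obtain ⟨v0, hv0, hlv0⟩ := Finset.mem_image.mp hj
      have hne : (NR.filter (fun v => T.label v = j)).Nonempty :=
        ⟨v0, Finset.mem_filter.mpr ⟨hv0, hlv0⟩⟩
      obtain ⟨v, hv, hmax⟩ := Finset.exists_max_image _ T.level hne
      have hv' := Finset.mem_filter.mp hv
      exact ⟨v, fun _ => ⟨(memNR v).mp hv'.1, hv'.2, fun u hu hlu =>
        hmax u (Finset.mem_filter.mpr ⟨(memNR u).mpr hu, hlu⟩)⟩⟩
    · exact ⟨T.root, fun hj' => absurd hj' hj⟩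
  choose f hf using hex
  set ψ : Fin N → Sym2 (Fin N) := fun j => T.edgeSym (f j) with hψ
  have symdef : ∀ x : T.V, T.edgeSym x = s(T.label x, T.label (T.parent x)) := fun x => rfl
  have symf : ∀ j ∈ B, ψ j = s(j, T.label (T.parent (f j))) := by
    intro j hj
    rw [hψ]; dsimp only; rw [symdef, (hf j hj).2.1]
  have noLoop : ∀ j ∈ B', T.label (T.parent (f j)) ≠ j := by
    intro j hj heq
    have hjB := hB'B hj
    have hjr : j ≠ r := Finset.ne_of_mem_erase hj
    by_cases hpr : T.parent (f j) = T.root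
    · rw [hpr] at heq; exact hjr (hr ▸ heq.symm) |>.elim
    · have h1 : T.level (T.parent (f j)) ≤ T.level (f j) :=
        (hf j hjB).2.2 _ hpr heq
      have h2 : T.level (T.parent (f j)) = T.level (f j) + 1 :=
        T.level_parent _ (hf j hjB).1
      omega
  have hup : ∀ k ∈ B, T.label (T.parent (f k)) ≠ r →
      (T.parent (f k) ≠ T.root ∧ T.label (T.parent (f k)) ∈ B ∧
        T.level (f k) < T.level (f (T.label (T.parent (f k))))) := by
    intro k hk hne
    have hpr : T.parent (f k) ≠ T.root := by
      intro hcon; exact hne (by rw [hcon, ← hr])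
    have hmem : T.label (T.parent (f k)) ∈ B := hBmem _ hpr
    have h1 : T.level (T.parent (f k)) ≤ T.level (f (T.label (T.parent (f k)))) :=
      (hf _ hmem).2.2 _ hpr rfl
    have h2 : T.level (T.parent (f k)) = T.level (f k) + 1 :=
      T.level_parent _ (hf k hk).1
    exact ⟨hpr, hmem, by omega⟩
  have hinj : Set.InjOn ψ ↑B' := by
    intro j hj k hk heq
    by_contra hne
    have hjB := hB'B (by exact_mod_cast hj)
    have hkB := hB'B (by exact_mod_cast hk)
    rw [symf j hjB, symf k hkB] at heq
    rcases Sym2.eq_iff.mp heq with ⟨h1, _⟩ | ⟨h1, h2⟩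
    · exact hne h1
    -- j = label parent f k, label parent f j = k
    · have hjr : j ≠ r := Finset.ne_of_mem_erase (by exact_mod_cast hj)
      have hkr : k ≠ r := Finset.ne_of_mem_erase (by exact_mod_cast hk)
      have u1 := hup j hjB (by rw [h2]; exact hkr)
      have u2 := hup k hkB (by rw [← h1]; exact hjr)
      rw [h2] at u1
      rw [← h1] at u2
      have := u1.2.2
      have := u2.2.2
      omega
  have h3 : B'.card ≤ S.card :=
    Finset.card_le_card_of_injOn ψ (fun j hj => hSmem _ (hf _ (hB'B hj)).1) hinj
  have hAsub : A ⊆ insert r B := by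
    intro x hx
    obtain ⟨v, _, rfl⟩ := Finset.mem_image.mp hx
    by_cases hv : v = T.root
    · subst hv; exact Finset.mem_insert_self _ _
    · exact Finset.mem_insert_of_mem (hBmem v hv)
  have hsub2 : insert r B ⊆ insert r B' := by
    intro x hx
    rcases Finset.mem_insert.mp hx with rfl | hx
    · exact Finset.mem_insert_self _ _
    · by_cases hxr : x = r
      · subst hxr; exact Finset.mem_insert_self _ _
      · exact Finset.mem_insert_of_mem (Finset.mem_erase.mpr ⟨hxr, hx⟩)
  have h4 : A.card ≤ B'.card + 1 := by
    calc A.card ≤ (insert r B').card := Finset.card_le_card (hAsub.trans hsub2)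
    _ ≤ B'.card + 1 := Finset.card_insert_le _ _
  have hsum_lb : 2 * S.card ≤ NR.card := by
    rw [fibersum]
    calc 2 * S.card = ∑ _s ∈ S, 2 := by rw [Finset.sum_const, smul_eq_mul]; ring
    _ ≤ ∑ s ∈ S, (NR.filter (fun v => T.edgeSym v = s)).card := Finset.sum_le_sum fib2
  have hLA : T.numLabels = A.card := rfl
  -- all inequalities are equalities
  have hScard : NR.card = 2 * S.card ∧ S.card = B'.card := by
    constructor <;> omega
  have hfib : ∀ s ∈ S, (NR.filter (fun v => T.edgeSym v = s)).card = 2 := by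
    have hsum : (∑ _s ∈ S, 2) = ∑ s ∈ S, (NR.filter (fun v => T.edgeSym v = s)).card := by
      rw [← fibersum, Finset.sum_const, smul_eq_mul]
      omega
    intro s hs
    exact ((Finset.sum_eq_sum_iff_of_le fib2).mp hsum s hs).symm
  have hSeq : ∀ s ∈ S, ∃ j ∈ B', ψ j = s := by
    have himg : B'.image ψ = S := by
      apply Finset.eq_of_subset_of_card_le
      · intro s hs
        obtain ⟨j, hj, rfl⟩ := Finset.mem_image.mp hs
        exact hSmem _ (hf _ (hB'B hj)).1
      · rw [Finset.card_image_of_injOn hinj]; omega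
    intro s hs
    rw [← himg] at hs
    obtain ⟨j, hj, hjs⟩ := Finset.mem_image.mp hs
    exact ⟨j, hj, hjs⟩
  -- the key structural induction
  have key : ∀ n : ℕ, ∀ j ∈ B', T.level (f j) = n →
      (∀ v, v ≠ T.root → T.label v = j → T.edgeSym v = ψ j) ∧
      (∀ w, w ≠ T.root → T.edgeSym w = ψ j → T.label w = j) := by
    intro n
    induction n using Nat.strong_induction_on with
    | _ n IH =>
      intro j hj hn
      have hjB := hB'B hj
      have hjr : j ≠ r := Finset.ne_of_mem_erase hj
      have step1 : ∀ v, v ≠ T.root → T.label v = j → T.edgeSym v = ψ j := by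
        intro v hv hlv
        obtain ⟨k, hk, hkv⟩ := hSeq _ (hSmem v hv)
        have hkB := hB'B hk
        have hkv' : s(k, T.label (T.parent (f k))) = s(j, T.label (T.parent v)) := by
          rw [← symf k hkB, hkv, symdef, hlv]
        rcases Sym2.eq_iff.mp hkv' with ⟨h1, _⟩ | ⟨h1, h2⟩
        · rw [← hkv, h1]
        · -- k = label parent v, label parent f k = j
          by_cases hkj : k = j
          · exact absurd (hkj ▸ h2) (noLoop k hk)
          · have hu := hup k hkB (by rw [h2]; exact hjr)
            rw [h2] at hu
            have hlt : T.level (f k) < n := by omega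
            have := ((IH _ hlt k hk rfl).2 v hv hkv.symm)
            exact absurd (this.symm.trans hlv) hkj
      refine ⟨step1, ?_⟩
      intro w hw hsw
      have hsw' : s(T.label w, T.label (T.parent w)) = s(j, T.label (T.parent (f j))) := by
        rw [← symdef, hsw, symf j hjB]
      rcases Sym2.eq_iff.mp hsw' with ⟨h1, _⟩ | ⟨h1, h2⟩
      · exact h1
      · -- label w = label parent f j, label parent w = j
        exfalso
        have hpw : T.parent w ≠ T.root := by
          intro hcon; rw [hcon, ← hr] at h2; exact hjr h2.symm
        have hx := step1 (T.parent w) hpw h2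
        have hx' : s(j, T.label (T.parent (T.parent w))) = s(j, T.label (T.parent (f j))) := by
          rw [← h2, ← symdef, hx, symf j hjB, h2]
        have hxx : T.label (T.parent (T.parent w)) = T.label (T.parent (f j)) := by
          rcases Sym2.eq_iff.mp hx' with ⟨_, hb⟩ | ⟨ha, _⟩
          · exact hb
          · exact absurd ha.symm (noLoop j hj)
        exact T.nonbacktracking w hw hpw (hxx.trans h1.symm)
  have Pall : ∀ j ∈ B', (∀ v, v ≠ T.root → T.label v = j → T.edgeSym v = ψ j) ∧
      (∀ w, w ≠ T.root → T.edgeSym w = ψ j → T.label w = j) :=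
    fun j hj => key _ j hj rfl
  -- root label is not shared
  have hnoR : ∀ v : T.V, v ≠ T.root → T.label v ≠ r := by
    intro v hv hlv
    obtain ⟨k, hk, hkv⟩ := hSeq _ (hSmem v hv)
    have := (Pall k hk).2 v hv hkv.symm
    exact Finset.ne_of_mem_erase hk (by rw [← this, hlv])
  have hBmem' : ∀ v : T.V, v ≠ T.root → T.label v ∈ B' :=
    fun v hv => Finset.mem_erase.mpr ⟨hnoR v hv, hBmem v hv⟩
  -- C5 : equal labels give equal syms
  have C5 : ∀ v w : T.V, v ≠ T.root → w ≠ T.root → T.label v = T.label w →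
      T.edgeSym v = T.edgeSym w := by
    intro v w hv hw hlab
    have hj := hBmem' v hv
    rw [(Pall _ hj).1 v hv rfl, (Pall _ hj).1 w hw hlab.symm]
  -- C2 : equal syms give equal labels
  have C2 : ∀ v w : T.V, v ≠ T.root → w ≠ T.root → T.edgeSym w = T.edgeSym v →
      T.label w = T.label v := by
    intro v w hv hw hsym
    have hj := hBmem' v hv
    exact (Pall _ hj).2 w hw (by rw [hsym, (Pall _ hj).1 v hv rfl])
  -- C4 : equal labels give equal levels
  have lvl : ∀ n : ℕ, ∀ j ∈ B', T.depth - T.level (f j) = n →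
      ∀ v w, v ≠ T.root → w ≠ T.root → T.label v = j → T.label w = j →
        T.level v = T.level w := by
    intro n
    induction n using Nat.strong_induction_on with
    | _ n IH =>
      intro j hj hn v w hv hw hlv hlw
      have hjB := hB'B hj
      have hjr : j ≠ r := Finset.ne_of_mem_erase hj
      have hpar : ∀ u, u ≠ T.root → T.label u = j →
          T.label (T.parent u) = T.label (T.parent (f j)) := by
        intro u hu hlu
        have := (Pall j hj).1 u hu hlu
        have h' : s(T.label u, T.label (T.parent u)) = s(j, T.label (T.parent (f j))) := by
          rw [← symdef, this, symf j hjB]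
        rw [hlu] at h'
        rcases Sym2.eq_iff.mp h' with ⟨_, hb⟩ | ⟨ha, _⟩
        · exact hb
        · exact absurd ha.symm (noLoop j hj)
      have hpv := hpar v hv hlv
      have hpw := hpar w hw hlw
      by_cases hplr : T.label (T.parent (f j)) = r
      · have hpv' : T.parent v = T.root := by
          by_contra hcon
          exact hnoR _ hcon (hpv.trans hplr)
        have hpw' : T.parent w = T.root := by
          by_contra hcon
          exact hnoR _ hcon (hpw.trans hplr)
        have e1 := T.level_parent v hv
        have e2 := T.level_parent w hw
        rw [hpv'] at e1; rw [hpw'] at e2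
        omega
      · have hu := hup j hjB hplr
        set k := T.label (T.parent (f j)) with hk
        have hkB' : k ∈ B' := Finset.mem_erase.mpr ⟨hplr, hu.2.1⟩
        have hlt : T.depth - T.level (f k) < n := by
          have l1 := T.level_le (f k)
          have l2 := T.level_le (f j)
          have l3 : T.level (f j) < T.level (f k) := hu.2.2
          omega
        have hpvroot : T.parent v ≠ T.root := by
          intro hcon; rw [hcon, ← hr] at hpv; exact hplr hpv.symm
        have hpwroot : T.parent w ≠ T.root := by
          intro hcon; rw [hcon, ← hr] at hpw; exact hplr hpw.symm
        have := IH _ hlt k hkB' rfl (T.parent v) (T.parent w) hpvroot hpwroot hpv hpw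
        have e1 := T.level_parent v hv
        have e2 := T.level_parent w hw
        omega
  have C4 : ∀ v w : T.V, v ≠ T.root → w ≠ T.root → T.label v = T.label w →
      T.level v = T.level w := by
    intro v w hv hw hlab
    exact lvl _ _ (hBmem' v hv) rfl v w hv hw rfl hlab.symm
  -- C3 : fibers have exactly two elements
  have C3 : ∀ v : T.V, v ≠ T.root →
      ((Finset.univ.filter (fun w => w ≠ T.root)).filter
        (fun w => T.edgeSym w = T.edgeSym v)).card = 2 := by
    intro v hv
    exact hfib _ (hSmem v hv)
  exact ⟨fun v hv => hnoR v hv, C2, C3, C4, C5⟩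

end LabeledMonomialTree

/-- **Excess zero is equivalent to a perfect row-wise Wick pairing.**
For a labeled monomial tree `T`: `Δ(T) = 0` if and only if every non-root vertex label
appears exactly twice, with both occurrences in the same generation.  In this case the
edges of `T` are perfectly paired row by row: each edge has a unique partner carrying
the same pair of endpoint labels and lying in the same generation, and (for any standard
ordering) each such pair consists of exactly one `T₁` edge and one `T₂` edge. -/
theorem excess_eq_zero_iff_perfect_wick_pairing {N : ℕ} (T : LabeledMonomialTree N)
    (O : T.StdOrder) :
    (T.excess = 0 ↔ ∀ v, v ≠ T.root →
      Set.ncard {w : T.V | T.label w = T.label v} = 2 ∧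
      ∀ w, T.label w = T.label v → T.level w = T.level v) ∧
    (T.excess = 0 → ∀ v, v ≠ T.root → ∃! w, w ≠ T.root ∧ w ≠ v ∧
      T.edgeSym w = T.edgeSym v ∧ T.level w = T.level v ∧
      ((T.IsT1 O v ∧ T.IsT2 O w) ∨ (T.IsT2 O v ∧ T.IsT1 O w))) := by
    classical
  have symdef : ∀ x : T.V, T.edgeSym x = s(T.label x, T.label (T.parent x)) := fun x => rfl
  constructor
  · constructor
    · -- forward direction of the iff
      intro h v hv
      obtain ⟨C1, C2, C3, C4, C5⟩ := T.aux_core h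
      have hset : {w : T.V | T.label w = T.label v} =
          ↑((Finset.univ.filter (fun w => w ≠ T.root)).filter
            (fun w => T.edgeSym w = T.edgeSym v)) := by
        ext u
        simp only [Set.mem_setOf_eq, Finset.coe_filter, Finset.mem_filter,
          Finset.mem_univ, true_and, Set.mem_setOf_eq]
        constructor
        · intro hlab
          have hu : u ≠ T.root := by
            intro hcon
            exact C1 v hv (by rw [← hlab, hcon])
          exact ⟨hu, C5 u v hu hv hlab⟩
        · intro ⟨hu, hsym⟩
          exact C2 v u hv hu hsym
      constructor
      · rw [hset, Set.ncard_coe_finset]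
        exact C3 v hv
      · intro w hlab
        have hw : w ≠ T.root := by
          intro hcon
          exact C1 v hv (by rw [← hlab, hcon])
        exact C4 w v hw hv hlab
    · -- backward direction of the iff
      intro H
      have hrootlab : ∀ v : T.V, v ≠ T.root → T.label v ≠ T.label T.root := by
        intro v hv hlab
        have h2 := (H v hv).2 T.root hlab.symm
        rw [T.level_root] at h2
        have e1 := T.level_parent v hv
        have e2 := T.level_le (T.parent v)
        omega
      set NR : Finset T.V := Finset.univ.filter (fun w => w ≠ T.root) with hNR
      have memNR : ∀ v : T.V, v ∈ NR ↔ v ≠ T.root := by intro v; simp [hNR]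
      set B : Finset (Fin N) := NR.image T.label with hB
      have fibersum : NR.card = ∑ j ∈ B, (NR.filter (fun v => T.label v = j)).card :=
        Finset.card_eq_sum_card_fiberwise (fun v hv => Finset.mem_image_of_mem _ hv)
      have hfib : ∀ j ∈ B, (NR.filter (fun v => T.label v = j)).card = 2 := by
        intro j hj
        obtain ⟨v0, hv0, rfl⟩ := Finset.mem_image.mp hj
        have hv0' : v0 ≠ T.root := (memNR v0).mp hv0
        have h1 := (H v0 hv0').1
        have hset : {w : T.V | T.label w = T.label v0} =
            ↑(NR.filter (fun v => T.label v = T.label v0)) := by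
          ext u
          simp only [Set.mem_setOf_eq, Finset.coe_filter, Finset.mem_filter, memNR,
            Set.mem_setOf_eq]
          constructor
          · intro hlab
            refine ⟨?_, hlab⟩
            intro hcon
            exact hrootlab v0 hv0' (by rw [← hlab, hcon])
          · exact fun h => h.2
        rw [hset, Set.ncard_coe_finset] at h1
        exact h1
      have hEB : NR.card = 2 * B.card := by
        rw [fibersum, Finset.sum_congr rfl hfib, Finset.sum_const, smul_eq_mul]
        ring
      have hrB : T.label T.root ∉ B := by
        intro hcon
        obtain ⟨v, hv, hlab⟩ := Finset.mem_image.mp hcon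
        exact hrootlab v ((memNR v).mp hv) hlab
      have hA : (Finset.univ.image T.label) = insert (T.label T.root) B := by
        apply Finset.Subset.antisymm
        · intro x hx
          obtain ⟨v, _, rfl⟩ := Finset.mem_image.mp hx
          by_cases hv : v = T.root
          · subst hv; exact Finset.mem_insert_self _ _
          · exact Finset.mem_insert_of_mem (Finset.mem_image_of_mem _
              (Finset.mem_filter.mpr ⟨Finset.mem_univ _, hv⟩))
        · intro x hx
          rcases Finset.mem_insert.mp hx with rfl | hx
          · exact Finset.mem_image_of_mem _ (Finset.mem_univ _)
          · obtain ⟨v, _, rfl⟩ := Finset.mem_image.mp hx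
            exact Finset.mem_image_of_mem _ (Finset.mem_univ _)
      have hL : T.numLabels = B.card + 1 := by
        show (Finset.univ.image T.label).card = B.card + 1
        rw [hA, Finset.card_insert_of_notMem hrB]
      have hE : T.numEdges = NR.card := Fintype.card_subtype _
      show (T.numEdges : ℚ) / 2 - (T.numLabels : ℚ) + 1 = 0
      rw [hE, hL, hEB]
      push_cast
      ring
  · -- the pairing statement
    intro h v hv
    obtain ⟨C1, C2, C3, C4, C5⟩ := T.aux_core h
    set F : Finset T.V := (Finset.univ.filter (fun w => w ≠ T.root)).filter
      (fun w => T.edgeSym w = T.edgeSym v) with hF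
    have memF : ∀ u : T.V, u ∈ F ↔ (u ≠ T.root ∧ T.edgeSym u = T.edgeSym v) := by
      intro u; simp [hF]
    have hvF : v ∈ F := (memF v).mpr ⟨hv, rfl⟩
    have hcard : F.card = 2 := C3 v hv
    obtain ⟨x, y, hxy, hFxy⟩ := Finset.card_eq_two.mp hcard
    have hvxy : v = x ∨ v = y := by
      have := hvF
      rw [hFxy] at this
      simpa using this
    obtain ⟨w, hwv, hFvw⟩ : ∃ w, w ≠ v ∧ F = {v, w} := by
      rcases hvxy with rfl | rfl
      · exact ⟨y, hxy.symm, hFxy⟩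
      · exact ⟨x, hxy, by rw [hFxy, Finset.pair_comm]⟩
    have hwF : w ∈ F := by rw [hFvw]; simp
    have hwnr : w ≠ T.root := ((memF w).mp hwF).1
    have hwsym : T.edgeSym w = T.edgeSym v := ((memF w).mp hwF).2
    -- T1/T2 for the two elements of a pair, ordered
    have t1t2 : ∀ a b : T.V, F = {a, b} → O.ord a < O.ord b →
        T.IsT1 O a ∧ T.IsT2 O b := by
      intro a b hab hord
      have haF : a ∈ F := by rw [hab]; simp
      have hbF : b ∈ F := by rw [hab]; simp
      have hanr : a ≠ T.root := ((memF a).mp haF).1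
      have hbnr : b ≠ T.root := ((memF b).mp hbF).1
      have hasym : T.edgeSym a = T.edgeSym v := ((memF a).mp haF).2
      have hbsym : T.edgeSym b = T.edgeSym v := ((memF b).mp hbF).2
      have hmemF : ∀ u, u ≠ T.root → T.label u = T.label a → u = a ∨ u = b := by
        intro u hu hlab
        have hsymu : T.edgeSym u = T.edgeSym a := C5 u a hu hanr hlab
        have huF : u ∈ F := (memF u).mpr ⟨hu, hsymu.trans hasym⟩
        rw [hab] at huF
        simpa using huF
      have hT1 : T.IsT1 O a := by
        refine ⟨hanr, ?_⟩
        intro u hu hord' hlab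
        rcases hmemF u hu hlab with rfl | rfl
        · exact absurd hord' (lt_irrefl _)
        · exact absurd (hord'.trans hord) (lt_irrefl _)
      refine ⟨hT1, hbnr, a, hanr, hord, hasym.trans hbsym.symm, hT1, ?_⟩
      intro u hu hsymu hordu
      have huF : u ∈ F := (memF u).mpr ⟨hu, hsymu.trans hbsym⟩
      rw [hab] at huF
      rcases (by simpa using huF : u = a ∨ u = b) with rfl | rfl
      · rfl
      · exact absurd hordu (lt_irrefl _)
    have hlabw : T.label w = T.label v := C2 v w hv hwnr hwsym
    refine ⟨w, ⟨hwnr, hwv, hwsym, C4 w v hwnr hv hlabw, ?_⟩, ?_⟩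
    · have hordne : O.ord v ≠ O.ord w := fun hcon => hwv.symm (O.inj hcon)
      rcases hordne.lt_or_gt with hlt | hlt
      · exact Or.inl (t1t2 v w hFvw hlt)
      · exact Or.inr ⟨(t1t2 w v (by rw [hFvw, Finset.pair_comm]) hlt).2,
          (t1t2 w v (by rw [hFvw, Finset.pair_comm]) hlt).1⟩
    · intro w' hw'
      obtain ⟨hw'nr, hw'v, hw'sym, _, _⟩ := hw'
      have : w' ∈ F := (memF w').mpr ⟨hw'nr, hw'sym⟩
      rw [hFvw] at this
      rcases (by simpa using this : w' = v ∨ w' = w) with rfl | rfl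
      · exact absurd rfl hw'v
      · rfl
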